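/- arXiv:2404.07385 — 2 statements merged into one kernel-verified Lean document; each statement's English description precedes it below -/
import Mathlib

section
/- Let σ_e > 0, σ_s > 0, δ ≥ 0, M > 0 be constants with σ_s > δ, and let Γ ∈ ℝ^{q×q} be a symmetric positive-definite matrix. Let e : [0,∞) → ℝⁿ and θ̃ : [0,∞) → ℝ^q be locally absolutely continuous functions, let P : [0,∞) → ℝ^{n×q} be a measurable matrix-valued function with ‖P(t)‖ ≤ M for all t, let d : [0,∞) → ℝⁿ be measurable with ‖d(t)‖ ≤ δ for all t, and let s : [0,∞) → ℝⁿ be measurable with s(t) ∈ K[sgn](e(t)) for all t. Suppose that for almost every t ≥ 0 the closed-loop dynamics hold: ė(t) = P(t)θ̃(t) + d(t) − σ_e e(t) − σ_s s(t), and the adaptation law holds: θ̃̇(t) = −Γ P(t)ᵀ e(t). Then, with z(t) = (e(t), θ̃(t)), α₁ = (1/2)·min(1, λ_min(Γ⁻¹)) and α₂ = (1/2)·max(1, λ_max(Γ⁻¹)): (i) ‖z(t)‖ ≤ √(α₂/α₁)·‖z(0)‖ for all t ≥ 0 (in particular z is bounded), and (ii) ‖e(t)‖ → 0 as t → ∞.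 -/
open MeasureTheory Matrix

/-- The Filippov set-valued sign map `K[sgn]`: `s ∈ K[sgn](e)` iff `sᵢ = sign(eᵢ)` whenever
`eᵢ ≠ 0` and `sᵢ ∈ [−1,1]` whenever `eᵢ = 0`. -/
def filippovSgn {n : ℕ} (e : EuclideanSpace ℝ (Fin n)) : Set (EuclideanSpace ℝ (Fin n)) :=
  {s | ∀ i, (e i ≠ 0 → s i = Real.sign (e i)) ∧ (e i = 0 → s i ∈ Set.Icc (-1 : ℝ) 1)}

section RACAuxiliary

open Set

lemma RAC.qform_bounds {m : ℕ} (hm : 0 < m) (A : Matrix (Fin m) (Fin m) ℝ) (hA : A.PosDef)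
    (x : EuclideanSpace ℝ (Fin m)) :
    (⨅ i, hA.1.eigenvalues i) * ‖x‖ ^ 2 ≤ inner ℝ x (Matrix.toEuclideanLin A x) ∧
      (inner ℝ x (Matrix.toEuclideanLin A x) : ℝ) ≤ (⨆ i, hA.1.eigenvalues i) * ‖x‖ ^ 2 := by
  haveI : Nonempty (Fin m) := ⟨⟨0, hm⟩⟩
  set b := hA.1.eigenvectorBasis with hb
  set lam := hA.1.eigenvalues with hlam
  have hsymm : (Matrix.toEuclideanLin A).IsSymmetric := Matrix.isHermitian_iff_isSymmetric.1 hA.1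
  have hAb : ∀ i, Matrix.toEuclideanLin A (b i) = lam i • b i := by
    intro i
    have := hA.1.mulVec_eigenvectorBasis i
    apply (WithLp.equiv 2 _).injective
    simpa [Matrix.toEuclideanLin_apply] using this
  have hexp : (inner ℝ x (Matrix.toEuclideanLin A x) : ℝ) = ∑ i, lam i * (inner ℝ (b i) x : ℝ) ^ 2 := by
    rw [← b.sum_inner_mul_inner x (Matrix.toEuclideanLin A x)]
    refine Finset.sum_congr rfl fun i _ => ?_
    have h1 : (inner ℝ (b i) (Matrix.toEuclideanLin A x) : ℝ) = lam i * inner ℝ (b i) x := by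
      rw [← hsymm (b i) x, hAb i, inner_smul_left]
      simp [RCLike.conj_to_real]
    rw [h1, real_inner_comm x (b i)]
    ring
  have hnorm : ‖x‖ ^ 2 = ∑ i, (inner ℝ (b i) x : ℝ) ^ 2 := by
    rw [← real_inner_self_eq_norm_sq, ← b.sum_inner_mul_inner x x]
    refine Finset.sum_congr rfl fun i _ => ?_
    rw [real_inner_comm x (b i)]; ring
  constructor
  · rw [hexp, hnorm, Finset.mul_sum]
    refine Finset.sum_le_sum fun i _ => ?_
    have h1 : (⨅ i, lam i) ≤ lam i := ciInf_le (Set.Finite.bddBelow (Set.finite_range _)) i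
    nlinarith [sq_nonneg ((inner ℝ (b i) x : ℝ))]
  · rw [hexp, hnorm, Finset.mul_sum]
    refine Finset.sum_le_sum fun i _ => ?_
    have h1 : lam i ≤ ⨆ i, lam i := le_ciSup (Set.Finite.bddAbove (Set.finite_range _)) i
    nlinarith [sq_nonneg ((inner ℝ (b i) x : ℝ))]

lemma RAC.primitive_continuousOn {m : ℕ} (f : ℝ → EuclideanSpace ℝ (Fin m)) (t : ℝ)
    (hf : IntegrableOn f (Ioc 0 t)) :
    ContinuousOn (fun τ => ∫ σ in Ioc 0 τ, f σ) (Icc 0 t) :=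
  intervalIntegral.continuousOn_primitive (by rwa [integrableOn_Icc_iff_integrableOn_Ioc])

lemma RAC.inner_primitive_integrable {m : ℕ} (f g : ℝ → EuclideanSpace ℝ (Fin m)) (t : ℝ)
    (hf : IntegrableOn f (Ioc 0 t)) (hg : IntegrableOn g (Ioc 0 t)) :
    IntegrableOn (fun τ => (inner ℝ (∫ σ in Ioc 0 τ, f σ) (g τ) : ℝ)) (Ioc 0 t) := by
  set Cf := ∫ σ in Ioc 0 t, ‖f σ‖ with hCf
  have hIfb : ∀ τ ∈ Icc (0:ℝ) t, ‖∫ σ in Ioc 0 τ, f σ‖ ≤ Cf := by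
    intro τ hτ
    refine (norm_integral_le_integral_norm _).trans ?_
    exact setIntegral_mono_set hf.norm (Filter.Eventually.of_forall fun x => norm_nonneg _)
      (HasSubset.Subset.eventuallyLE (Ioc_subset_Ioc_right hτ.2))
  refine Integrable.mono' (hg.norm.const_mul Cf) ?_ ?_
  · exact (((RAC.primitive_continuousOn f t hf).mono Ioc_subset_Icc_self).aestronglyMeasurable
      measurableSet_Ioc).inner hg.aestronglyMeasurable
  · rw [ae_restrict_iff' measurableSet_Ioc]
    refine Filter.Eventually.of_forall fun τ hτ => ?_
    calc ‖(inner ℝ (∫ σ in Ioc 0 τ, f σ) (g τ) : ℝ)‖ ≤ ‖∫ σ in Ioc 0 τ, f σ‖ * ‖g τ‖ :=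
          norm_inner_le_norm _ _
      _ ≤ Cf * ‖g τ‖ := by
          have := hIfb τ (Ioc_subset_Icc_self hτ)
          nlinarith [norm_nonneg (g τ), norm_nonneg (∫ σ in Ioc 0 τ, f σ)]

lemma RAC.inner_primitive_integrable' {m : ℕ} (f g : ℝ → EuclideanSpace ℝ (Fin m)) (t : ℝ)
    (hf : IntegrableOn f (Ioc 0 t)) (hg : IntegrableOn g (Ioc 0 t)) :
    IntegrableOn (fun τ => (inner ℝ (f τ) (∫ σ in Ioc 0 τ, g σ) : ℝ)) (Ioc 0 t) := by
  have := RAC.inner_primitive_integrable g f t hg hf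
  refine this.congr ?_
  exact Filter.Eventually.of_forall fun τ => real_inner_comm _ _

lemma RAC.fubini_pairing {m : ℕ} (f g : ℝ → EuclideanSpace ℝ (Fin m)) (t : ℝ) (ht : 0 ≤ t)
    (hf : IntegrableOn f (Ioc 0 t)) (hg : IntegrableOn g (Ioc 0 t)) :
    (inner ℝ (∫ σ in Ioc 0 t, f σ) (∫ τ in Ioc 0 t, g τ) : ℝ) =
      ∫ τ in Ioc 0 t, ((inner ℝ (∫ σ in Ioc 0 τ, f σ) (g τ) : ℝ)
        + (inner ℝ (f τ) (∫ σ in Ioc 0 τ, g σ) : ℝ)) := by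
  set μ := volume.restrict (Ioc (0:ℝ) t) with hμ
  haveI hμfin : IsFiniteMeasure μ := by
    constructor
    rw [hμ, Measure.restrict_apply_univ, Real.volume_Ioc]
    exact ENNReal.ofReal_lt_top
  set J : ℝ → ℝ → ℝ := fun τ σ => if τ < σ then (inner ℝ (f σ) (g τ) : ℝ) else 0 with hJ
  have hJm : AEStronglyMeasurable (Function.uncurry J) (μ.prod μ) := by
    have h1 : AEStronglyMeasurable (fun p : ℝ × ℝ => f p.2) (μ.prod μ) :=
      hf.aestronglyMeasurable.comp_quasiMeasurePreserving Measure.quasiMeasurePreserving_snd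
    have h2 : AEStronglyMeasurable (fun p : ℝ × ℝ => g p.1) (μ.prod μ) :=
      hg.aestronglyMeasurable.comp_quasiMeasurePreserving Measure.quasiMeasurePreserving_fst
    have h3 : AEStronglyMeasurable (fun p : ℝ × ℝ => (inner ℝ (f p.2) (g p.1) : ℝ)) (μ.prod μ) :=
      h1.inner h2
    have : Function.uncurry J =
        Set.indicator {p : ℝ × ℝ | p.1 < p.2} (fun p => (inner ℝ (f p.2) (g p.1) : ℝ)) := by
      funext p
      simp only [Function.uncurry, hJ, Set.indicator_apply, Set.mem_setOf_eq]
    rw [this]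
    exact h3.indicator (measurableSet_lt measurable_fst measurable_snd)
  have hJi : Integrable (Function.uncurry J) (μ.prod μ) := by
    refine Integrable.mono' (Integrable.mul_prod hg.norm hf.norm) hJm ?_
    refine Filter.Eventually.of_forall fun p => ?_
    simp only [Function.uncurry, hJ]
    split_ifs with h
    · calc ‖(inner ℝ (f p.2) (g p.1) : ℝ)‖ ≤ ‖f p.2‖ * ‖g p.1‖ := norm_inner_le_norm _ _
        _ = ‖g p.1‖ * ‖f p.2‖ := mul_comm _ _
    · simp [mul_nonneg (norm_nonneg _) (norm_nonneg _)]
  have ha_int : Integrable (fun τ => (inner ℝ (∫ σ in Ioc 0 τ, f σ) (g τ) : ℝ)) μ :=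
    RAC.inner_primitive_integrable f g t hf hg
  have hb_int : Integrable (fun τ => (inner ℝ (f τ) (∫ σ in Ioc 0 τ, g σ) : ℝ)) μ :=
    RAC.inner_primitive_integrable' f g t hf hg
  have hc_int : Integrable (fun τ => ∫ σ, J τ σ ∂μ) μ := hJi.integral_prod_left
  have hsplit : ∀ τ ∈ Ioc (0:ℝ) t,
      (inner ℝ (∫ σ in Ioc 0 t, f σ) (g τ) : ℝ) =
        (inner ℝ (∫ σ in Ioc 0 τ, f σ) (g τ) : ℝ) + ∫ σ, J τ σ ∂μ := by
    intro τ hτ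
    have hunion : Ioc (0:ℝ) t = Ioc 0 τ ∪ Ioc τ t := (Ioc_union_Ioc_eq_Ioc hτ.1.le hτ.2).symm
    have hdisj : Disjoint (Ioc (0:ℝ) τ) (Ioc τ t) := (Ioc_disjoint_Ioc_of_le le_rfl)
    have h1 : ∫ σ in Ioc 0 t, f σ = (∫ σ in Ioc 0 τ, f σ) + ∫ σ in Ioc τ t, f σ := by
      rw [hunion]
      exact setIntegral_union hdisj measurableSet_Ioc
        (hf.mono_set (by rw [hunion]; exact subset_union_left))
        (hf.mono_set (by rw [hunion]; exact subset_union_right))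
    have h2 : ∫ σ, J τ σ ∂μ = (inner ℝ (∫ σ in Ioc τ t, f σ) (g τ) : ℝ) := by
      have hind : ∀ σ : ℝ, J τ σ = (Ioi τ).indicator (fun σ => (inner ℝ (f σ) (g τ) : ℝ)) σ := by
        intro σ
        simp only [hJ, Set.indicator_apply, Set.mem_Ioi]
      calc ∫ σ, J τ σ ∂μ
          = ∫ σ in Ioc 0 t, (Ioi τ).indicator (fun σ => (inner ℝ (f σ) (g τ) : ℝ)) σ := by
            rw [hμ]; exact integral_congr_ae (Filter.Eventually.of_forall hind)
        _ = ∫ σ in Ioc 0 t ∩ Ioi τ, (inner ℝ (f σ) (g τ) : ℝ) :=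
            setIntegral_indicator measurableSet_Ioi
        _ = ∫ σ in Ioc τ t, (inner ℝ (f σ) (g τ) : ℝ) := by
            have hset : Ioc (0:ℝ) t ∩ Ioi τ = Ioc τ t := by
              ext x
              constructor
              · rintro ⟨⟨_, hxt⟩, hx⟩; exact ⟨hx, hxt⟩
              · rintro ⟨hx1, hx2⟩; exact ⟨⟨hτ.1.trans hx1, hx2⟩, hx1⟩
            rw [hset]
        _ = ∫ σ in Ioc τ t, (inner ℝ (g τ) (f σ) : ℝ) := by
            refine integral_congr_ae (Filter.Eventually.of_forall fun σ => real_inner_comm _ _)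
        _ = (inner ℝ (g τ) (∫ σ in Ioc τ t, f σ) : ℝ) :=
            integral_inner (hf.mono_set (Ioc_subset_Ioc_left hτ.1.le)) (g τ)
        _ = (inner ℝ (∫ σ in Ioc τ t, f σ) (g τ) : ℝ) := real_inner_comm _ _
    rw [h1, inner_add_left, h2]
  have hswap : ∫ τ, (∫ σ, J τ σ ∂μ) ∂μ =
      ∫ σ in Ioc 0 t, (inner ℝ (f σ) (∫ τ in Ioc 0 σ, g τ) : ℝ) := by
    rw [integral_integral_swap hJi]
    refine setIntegral_congr_fun measurableSet_Ioc fun σ hσ => ?_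
    have hind : ∀ τ : ℝ, J τ σ = (Iio σ).indicator (fun τ => (inner ℝ (f σ) (g τ) : ℝ)) τ := by
      intro τ
      simp only [hJ, Set.indicator_apply, Set.mem_Iio]
    calc ∫ τ, J τ σ ∂μ
        = ∫ τ in Ioc 0 t, (Iio σ).indicator (fun τ => (inner ℝ (f σ) (g τ) : ℝ)) τ := by
          rw [hμ]; exact integral_congr_ae (Filter.Eventually.of_forall hind)
      _ = ∫ τ in Ioc 0 t ∩ Iio σ, (inner ℝ (f σ) (g τ) : ℝ) := setIntegral_indicator measurableSet_Iio
      _ = ∫ τ in Ioo 0 σ, (inner ℝ (f σ) (g τ) : ℝ) := by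
          have hset : Ioc (0:ℝ) t ∩ Iio σ = Ioo 0 σ := by
            ext x
            constructor
            · rintro ⟨⟨hx0, _⟩, hx⟩; exact ⟨hx0, hx⟩
            · rintro ⟨hx0, hxσ⟩; exact ⟨⟨hx0, hxσ.le.trans hσ.2⟩, hxσ⟩
          rw [hset]
      _ = ∫ τ in Ioc 0 σ, (inner ℝ (f σ) (g τ) : ℝ) := (integral_Ioc_eq_integral_Ioo).symm
      _ = (inner ℝ (f σ) (∫ τ in Ioc 0 σ, g τ) : ℝ) :=
          integral_inner (hg.mono_set (Ioc_subset_Ioc_right hσ.2)) (f σ)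
  calc (inner ℝ (∫ σ in Ioc 0 t, f σ) (∫ τ in Ioc 0 t, g τ) : ℝ)
      = ∫ τ in Ioc 0 t, (inner ℝ (∫ σ in Ioc 0 t, f σ) (g τ) : ℝ) :=
        (integral_inner hg _).symm
    _ = ∫ τ, ((inner ℝ (∫ σ in Ioc 0 τ, f σ) (g τ) : ℝ) + ∫ σ, J τ σ ∂μ) ∂μ := by
        rw [hμ]
        exact setIntegral_congr_fun measurableSet_Ioc hsplit
    _ = (∫ τ, (inner ℝ (∫ σ in Ioc 0 τ, f σ) (g τ) : ℝ) ∂μ) + ∫ τ, (∫ σ, J τ σ ∂μ) ∂μ :=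
        integral_add ha_int hc_int
    _ = (∫ τ, (inner ℝ (∫ σ in Ioc 0 τ, f σ) (g τ) : ℝ) ∂μ)
        + ∫ σ, (inner ℝ (f σ) (∫ τ in Ioc 0 σ, g τ) : ℝ) ∂μ := by rw [hswap]
    _ = ∫ τ in Ioc 0 t, ((inner ℝ (∫ σ in Ioc 0 τ, f σ) (g τ) : ℝ)
        + (inner ℝ (f τ) (∫ σ in Ioc 0 τ, g σ) : ℝ)) := (integral_add ha_int hb_int).symm

lemma RAC.pairing_identity {m : ℕ} (f g u v : ℝ → EuclideanSpace ℝ (Fin m))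
    (hfInt : ∀ t, 0 ≤ t → IntegrableOn f (Ioc 0 t))
    (hgInt : ∀ t, 0 ≤ t → IntegrableOn g (Ioc 0 t))
    (hu : ∀ τ, 0 ≤ τ → u τ = u 0 + ∫ σ in Ioc 0 τ, f σ)
    (hv : ∀ τ, 0 ≤ τ → v τ = v 0 + ∫ σ in Ioc 0 τ, g σ)
    (t : ℝ) (ht : 0 ≤ t) :
    (inner ℝ (u t) (v t) : ℝ) =
      (inner ℝ (u 0) (v 0) : ℝ)
        + ∫ τ in Ioc 0 t, ((inner ℝ (f τ) (v τ) : ℝ) + (inner ℝ (u τ) (g τ) : ℝ)) := by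
  have hf := hfInt t ht
  have hg := hgInt t ht
  have hfub := RAC.fubini_pairing f g t ht hf hg
  have i1 : IntegrableOn (fun τ => (inner ℝ (f τ) (v 0) : ℝ)) (Ioc 0 t) := hf.inner_const _
  have i2 := RAC.inner_primitive_integrable' f g t hf hg
  have i3 : IntegrableOn (fun τ => (inner ℝ (u 0) (g τ) : ℝ)) (Ioc 0 t) := hg.const_inner _
  have i4 := RAC.inner_primitive_integrable f g t hf hg
  have h1 : ∫ τ in Ioc 0 t, (inner ℝ (f τ) (v 0) : ℝ) = inner ℝ (∫ σ in Ioc 0 t, f σ) (v 0) :=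
    calc ∫ τ in Ioc 0 t, (inner ℝ (f τ) (v 0) : ℝ)
        = ∫ τ in Ioc 0 t, (inner ℝ (v 0) (f τ) : ℝ) :=
          integral_congr_ae (Filter.Eventually.of_forall fun τ => real_inner_comm _ _)
      _ = inner ℝ (v 0) (∫ σ in Ioc 0 t, f σ) := integral_inner hf _
      _ = inner ℝ (∫ σ in Ioc 0 t, f σ) (v 0) := real_inner_comm _ _
  have h2 : ∫ τ in Ioc 0 t, (inner ℝ (u 0) (g τ) : ℝ) = inner ℝ (u 0) (∫ σ in Ioc 0 t, g σ) :=
    integral_inner hg _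
  have hexp : ∫ τ in Ioc 0 t, ((inner ℝ (f τ) (v τ) : ℝ) + (inner ℝ (u τ) (g τ) : ℝ))
      = ∫ τ in Ioc 0 t, (((inner ℝ (f τ) (v 0) : ℝ) + (inner ℝ (f τ) (∫ σ in Ioc 0 τ, g σ) : ℝ))
          + ((inner ℝ (u 0) (g τ) : ℝ) + (inner ℝ (∫ σ in Ioc 0 τ, f σ) (g τ) : ℝ))) := by
    refine setIntegral_congr_fun measurableSet_Ioc fun τ hτ => ?_
    rw [hu τ hτ.1.le, hv τ hτ.1.le, inner_add_right, inner_add_left]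
  have i12 : IntegrableOn (fun τ => (inner ℝ (f τ) (v 0) : ℝ)
      + (inner ℝ (f τ) (∫ σ in Ioc 0 τ, g σ) : ℝ)) (Ioc 0 t) := i1.add i2
  have i34 : IntegrableOn (fun τ => (inner ℝ (u 0) (g τ) : ℝ)
      + (inner ℝ (∫ σ in Ioc 0 τ, f σ) (g τ) : ℝ)) (Ioc 0 t) := i3.add i4
  have hsum : ∫ τ in Ioc 0 t, (((inner ℝ (f τ) (v 0) : ℝ)
        + (inner ℝ (f τ) (∫ σ in Ioc 0 τ, g σ) : ℝ))
        + ((inner ℝ (u 0) (g τ) : ℝ) + (inner ℝ (∫ σ in Ioc 0 τ, f σ) (g τ) : ℝ)))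
      = ((∫ τ in Ioc 0 t, (inner ℝ (f τ) (v 0) : ℝ))
          + ∫ τ in Ioc 0 t, (inner ℝ (f τ) (∫ σ in Ioc 0 τ, g σ) : ℝ))
        + ((∫ τ in Ioc 0 t, (inner ℝ (u 0) (g τ) : ℝ))
          + ∫ τ in Ioc 0 t, (inner ℝ (∫ σ in Ioc 0 τ, f σ) (g τ) : ℝ)) := by
    rw [integral_add i12 i34, integral_add i1 i2, integral_add i3 i4]
  have hfub' : (inner ℝ (∫ σ in Ioc 0 t, f σ) (∫ τ in Ioc 0 t, g τ) : ℝ)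
      = (∫ τ in Ioc 0 t, (inner ℝ (∫ σ in Ioc 0 τ, f σ) (g τ) : ℝ))
        + ∫ τ in Ioc 0 t, (inner ℝ (f τ) (∫ σ in Ioc 0 τ, g σ) : ℝ) := by
    rw [hfub]; exact integral_add i4 i2
  rw [hexp, hsum, hu t ht, hv t ht]
  rw [inner_add_right, inner_add_left, inner_add_left]
  linarith [hfub', h1, h2]

lemma RAC.inner_state_integrable {m : ℕ} (f g u : ℝ → EuclideanSpace ℝ (Fin m)) (t : ℝ)
    (hf : IntegrableOn f (Ioc 0 t)) (hg : IntegrableOn g (Ioc 0 t))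
    (hu : ∀ τ, 0 ≤ τ → u τ = u 0 + ∫ σ in Ioc 0 τ, f σ) :
    IntegrableOn (fun τ => (inner ℝ (u τ) (g τ) : ℝ)) (Ioc 0 t) := by
  have h1 : IntegrableOn (fun τ => (inner ℝ (u 0) (g τ) : ℝ)
      + (inner ℝ (∫ σ in Ioc 0 τ, f σ) (g τ) : ℝ)) (Ioc 0 t) :=
    (hg.const_inner _).add (RAC.inner_primitive_integrable f g t hf hg)
  refine h1.congr_fun (fun τ hτ => ?_) measurableSet_Ioc
  rw [hu τ hτ.1.le, inner_add_left]

lemma RAC.toEuclideanLin_comp_apply {a b c : ℕ} (A : Matrix (Fin a) (Fin b) ℝ)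
    (B : Matrix (Fin b) (Fin c) ℝ) (v : EuclideanSpace ℝ (Fin c)) :
    Matrix.toEuclideanLin A (Matrix.toEuclideanLin B v) = Matrix.toEuclideanLin (A * B) v := by
  simp [Matrix.toEuclideanLin_apply, Matrix.mulVec_mulVec]

lemma RAC.inner_toEuclideanLin_transpose {a b : ℕ} (A : Matrix (Fin a) (Fin b) ℝ)
    (x : EuclideanSpace ℝ (Fin a)) (y : EuclideanSpace ℝ (Fin b)) :
    (inner ℝ x (Matrix.toEuclideanLin A y) : ℝ) = inner ℝ y (Matrix.toEuclideanLin Aᵀ x) := by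
  have h : Aᵀ = Aᴴ := by
    rw [Matrix.conjTranspose]
    ext i j
    simp
  rw [h, Matrix.toEuclideanLin_conjTranspose_eq_adjoint, LinearMap.adjoint_inner_right,
    real_inner_comm]

lemma RAC.toEuclideanLin_one {a : ℕ} (v : EuclideanSpace ℝ (Fin a)) :
    Matrix.toEuclideanLin (1 : Matrix (Fin a) (Fin a) ℝ) v = v := by
  simp [Matrix.toEuclideanLin_apply]

lemma RAC.inner_filippov_ge {n : ℕ} (x s : EuclideanSpace ℝ (Fin n)) (hs : s ∈ filippovSgn x) :
    ‖x‖ ≤ (inner ℝ x s : ℝ) := by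
  have hinner : (inner ℝ x s : ℝ) = ∑ i, |x i| := by
    rw [PiLp.inner_apply]
    refine Finset.sum_congr rfl fun i _ => ?_
    simp only [RCLike.inner_apply, conj_trivial]
    by_cases h : x i = 0
    · simp [h]
    · rw [(hs i).1 h]
      rcases lt_trichotomy (x i) 0 with hlt | heq | hgt
      · rw [Real.sign_of_neg hlt, abs_of_neg hlt]; ring
      · exact absurd heq h
      · rw [Real.sign_of_pos hgt, abs_of_pos hgt]; ring
  have h1 : ‖x‖ ^ 2 = ∑ i, |x i| ^ 2 := by
    rw [← real_inner_self_eq_norm_sq, PiLp.inner_apply]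
    refine Finset.sum_congr rfl fun i _ => ?_
    simp only [RCLike.inner_apply, conj_trivial, sq_abs]
    ring
  have h2 : ∑ i, |x i| ^ 2 ≤ (∑ i, |x i|) ^ 2 :=
    Finset.sum_sq_le_sq_sum_of_nonneg fun i _ => abs_nonneg _
  have h3 : (0:ℝ) ≤ ∑ i, |x i| := Finset.sum_nonneg fun i _ => abs_nonneg _
  rw [hinner]
  nlinarith [norm_nonneg x]

lemma RAC.norm_filippov_le {n : ℕ} (x s : EuclideanSpace ℝ (Fin n)) (hs : s ∈ filippovSgn x) :
    ‖s‖ ≤ Real.sqrt n := by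
  have habs : ∀ i, |s i| ≤ 1 := by
    intro i
    by_cases h : x i = 0
    · exact abs_le.2 (Set.mem_Icc.1 ((hs i).2 h))
    · rw [(hs i).1 h]
      rcases lt_trichotomy (x i) 0 with hlt | heq | hgt
      · rw [Real.sign_of_neg hlt]; norm_num
      · exact absurd heq h
      · rw [Real.sign_of_pos hgt]; norm_num
  rw [Real.le_sqrt (norm_nonneg _) (Nat.cast_nonneg n)]
  have h1 : ‖s‖ ^ 2 = ∑ i, |s i| ^ 2 := by
    rw [← real_inner_self_eq_norm_sq, PiLp.inner_apply]
    refine Finset.sum_congr rfl fun i _ => ?_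
    simp only [RCLike.inner_apply, conj_trivial, sq_abs]
    ring
  rw [h1]
  calc ∑ i, |s i| ^ 2 ≤ ∑ _i : Fin n, (1:ℝ) := by
        refine Finset.sum_le_sum fun i _ => ?_
        have := habs i
        nlinarith [abs_nonneg (s i)]
    _ = n := by simp

open Filter in
lemma RAC.barbalat (g : ℝ → ℝ) (K C : ℝ) (hK : 0 < K) (hg0 : ∀ t, 0 ≤ g t)
    (hint : ∀ t, 0 ≤ t → IntegrableOn g (Ioc 0 t))
    (hC : ∀ t, 0 ≤ t → ∫ τ in Ioc 0 t, g τ ≤ C)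
    (hlip : ∀ r t, 0 ≤ r → r ≤ t → |g t - g r| ≤ K * (t - r)) :
    Tendsto g atTop (nhds 0) := by
  set I : ℝ → ℝ := fun t => ∫ τ in Ioc 0 t, g τ with hI
  have hIzero : ∀ t, t ≤ 0 → I t = 0 := by
    intro t ht
    simp only [hI]
    rw [Ioc_eq_empty (by exact fun h => absurd (h.trans_le ht) (lt_irrefl 0)),
      Measure.restrict_empty, integral_zero_measure]
  have hInonneg : ∀ t, 0 ≤ I t := by
    intro t
    rcases le_or_gt t 0 with ht | ht
    · rw [hIzero t ht]
    · exact setIntegral_nonneg measurableSet_Ioc fun τ _ => hg0 τ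
  have hIadd : ∀ r t, 0 ≤ r → r ≤ t → I t = I r + ∫ τ in Ioc r t, g τ := by
    intro r t hr hrt
    simp only [hI]
    rw [← setIntegral_union (Ioc_disjoint_Ioc_of_le le_rfl) measurableSet_Ioc
      ((hint t (hr.trans hrt)).mono_set (Ioc_subset_Ioc_right hrt))
      ((hint t (hr.trans hrt)).mono_set (Ioc_subset_Ioc_left hr)),
      Ioc_union_Ioc_eq_Ioc hr hrt]
  have hmono : Monotone I := by
    intro r t hrt
    rcases le_or_gt r 0 with hr | hr
    · rw [hIzero r hr]; exact hInonneg t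
    · rw [hIadd r t hr.le hrt]
      have : 0 ≤ ∫ τ in Ioc r t, g τ := setIntegral_nonneg measurableSet_Ioc fun τ _ => hg0 τ
      linarith
  have hbdd : BddAbove (Set.range I) := by
    refine ⟨max C 0, ?_⟩
    rintro _ ⟨t, rfl⟩
    rcases le_or_gt t 0 with ht | ht
    · rw [hIzero t ht]; exact le_max_right _ _
    · exact le_max_of_le_left (hC t ht.le)
  have htend : Tendsto I atTop (nhds (⨆ t, I t)) := tendsto_atTop_ciSup hmono hbdd
  set l := ⨆ t, I t with hl
  have hIle : ∀ t, I t ≤ l := fun t => le_ciSup hbdd t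
  rw [Metric.tendsto_atTop]
  intro ε hε
  set d := ε / (2 * K) with hd
  have hdpos : 0 < d := div_pos hε (by linarith)
  have hKd : K * d = ε / 2 := by
    field_simp [hd]
    rw [hd, mul_div_assoc', div_mul_eq_mul_div, div_eq_iff (by positivity)]; ring
  have hthresh : (0:ℝ) < ε / 2 * d := by positivity
  have hev : ∀ᶠ t in atTop, l - ε / 2 * d < I t :=
    htend.eventually (eventually_gt_nhds (by linarith))
  obtain ⟨T, hT⟩ := eventually_atTop.1 hev
  refine ⟨max T 0, fun t ht => ?_⟩
  have ht0 : 0 ≤ t := le_trans (le_max_right _ _) ht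
  have htT : T ≤ t := le_trans (le_max_left _ _) ht
  rw [Real.dist_eq, sub_zero, abs_of_nonneg (hg0 t)]
  by_contra hcon
  push_neg at hcon
  have hlb : ∀ τ ∈ Ioc t (t + d), ε / 2 ≤ g τ := by
    intro τ hτ
    have h1 := hlip t τ ht0 hτ.1.le
    have h2 := abs_le.1 h1
    have h3 : τ - t ≤ d := by linarith [hτ.2]
    have h4 : K * (τ - t) ≤ K * d := by nlinarith
    linarith [hKd ▸ h4, h2.1]
  have hmeas : volume (Ioc t (t + d)) ≠ ⊤ := by
    rw [Real.volume_Ioc]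
    exact ENNReal.ofReal_ne_top
  have hIestim : ε / 2 * d ≤ ∫ τ in Ioc t (t + d), g τ := by
    have := setIntegral_ge_of_const_le (μ := volume) measurableSet_Ioc hmeas hlb
      ((hint (t + d) (by linarith)).mono_set (Ioc_subset_Ioc_left ht0))
    rwa [Real.volume_real_Ioc_of_le (by linarith), add_sub_cancel_left, smul_eq_mul, mul_comm] at this
  have hIdiff : I (t + d) = I t + ∫ τ in Ioc t (t + d), g τ := hIadd t (t + d) ht0 (by linarith)
  have h5 := hT t htT
  have h6 := hIle (t + d)
  linarith

end RACAuxiliary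

set_option maxHeartbeats 1000000 in
/-- **Theorem 1 (classical-solutions content): Lyapunov-based ResNet adaptive control.**
Under the closed-loop error dynamics `ė = Pθ̃ + d − σ_e e − σ_s s` (a.e., with
`s(t) ∈ K[sgn](e(t))`, `‖P(t)‖ ≤ M`, `‖d(t)‖ ≤ δ < σ_s`) and the adaptation law
`θ̃̇ = −ΓPᵀe` (a.e.), where `e, θ̃` are locally absolutely continuous (represented by the
integral identities below), the concatenated state `z = (e, θ̃)` satisfies
`‖z(t)‖ ≤ √(α₂/α₁)·‖z(0)‖` for all `t ≥ 0` (in particular `z` is bounded), and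
`‖e(t)‖ → 0` as `t → ∞`; here `α₁ = ½min(1, λ_min(Γ⁻¹))`, `α₂ = ½max(1, λ_max(Γ⁻¹))`. -/
theorem resnet_adaptive_control_asymptotic_tracking
    (n q : ℕ) (hq : 0 < q)
    (σe σs δ M : ℝ) (hσe : 0 < σe) (hσs : 0 < σs) (hδ : 0 ≤ δ) (hM : 0 < M)
    (hgain : δ < σs)
    (Γ : Matrix (Fin q) (Fin q) ℝ) (hΓ : Γ.PosDef)
    (e e' : ℝ → EuclideanSpace ℝ (Fin n)) (θt θt' : ℝ → EuclideanSpace ℝ (Fin q))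
    (P : ℝ → Matrix (Fin n) (Fin q) ℝ) (d s : ℝ → EuclideanSpace ℝ (Fin n))
    (hPmeas : ∀ i j, Measurable fun t => P t i j) (hdmeas : Measurable d) (hsmeas : Measurable s)
    (hPbound : ∀ t, 0 ≤ t → ∀ v, ‖Matrix.toEuclideanLin (P t) v‖ ≤ M * ‖v‖)
    (hdbound : ∀ t, 0 ≤ t → ‖d t‖ ≤ δ)
    (hsgn : ∀ t, 0 ≤ t → s t ∈ filippovSgn (e t))
    -- local absolute continuity of `e` and `θ̃`:
    (heInt : ∀ t, 0 ≤ t → IntervalIntegrable e' volume 0 t)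
    (hθInt : ∀ t, 0 ≤ t → IntervalIntegrable θt' volume 0 t)
    (heAC : ∀ t, 0 ≤ t → e t = e 0 + ∫ τ in (0 : ℝ)..t, e' τ)
    (hθAC : ∀ t, 0 ≤ t → θt t = θt 0 + ∫ τ in (0 : ℝ)..t, θt' τ)
    -- the closed-loop dynamics and the adaptation law hold for almost every `t ≥ 0`:
    (hdyn : ∀ᵐ t ∂volume, 0 ≤ t →
      e' t = Matrix.toEuclideanLin (P t) (θt t) + d t - σe • e t - σs • s t)
    (hadapt : ∀ᵐ t ∂volume, 0 ≤ t →
      θt' t = -(Matrix.toEuclideanLin (Γ * (P t)ᵀ) (e t)))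
    (α₁ α₂ : ℝ)
    (hα₁ : α₁ = (1 / 2) * min 1 (⨅ i, hΓ.inv.1.eigenvalues i))
    (hα₂ : α₂ = (1 / 2) * max 1 (⨆ i, hΓ.inv.1.eigenvalues i)) :
    (∀ t, 0 ≤ t →
      Real.sqrt (‖e t‖ ^ 2 + ‖θt t‖ ^ 2) ≤
        Real.sqrt (α₂ / α₁) * Real.sqrt (‖e 0‖ ^ 2 + ‖θt 0‖ ^ 2)) ∧
    Filter.Tendsto (fun t => ‖e t‖) Filter.atTop (nhds 0) := by
  classical
  haveI : Nonempty (Fin q) := ⟨⟨0, hq⟩⟩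
  open Set in
  -- basic facts about α₁, α₂
  have hGdet : IsUnit Γ.det := isUnit_iff_ne_zero.2 (ne_of_gt hΓ.det_pos)
  have hlminpos : 0 < ⨅ i, hΓ.inv.1.eigenvalues i := by
    obtain ⟨i, hi⟩ := exists_eq_ciInf_of_finite (f := fun i => hΓ.inv.1.eigenvalues i)
    rw [← hi]
    exact hΓ.inv.eigenvalues_pos i
  have hα₁pos : 0 < α₁ := by
    rw [hα₁]
    have := lt_min one_pos hlminpos
    linarith
  have hα₁half : α₁ ≤ 1 / 2 := by
    rw [hα₁]
    have := min_le_left 1 (⨅ i, hΓ.inv.1.eigenvalues i)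
    linarith
  have hα₁lam : α₁ ≤ 1 / 2 * (⨅ i, hΓ.inv.1.eigenvalues i) := by
    rw [hα₁]
    have := min_le_right 1 (⨅ i, hΓ.inv.1.eigenvalues i)
    linarith
  have hα₂half : 1 / 2 ≤ α₂ := by
    rw [hα₂]
    have := le_max_left 1 (⨆ i, hΓ.inv.1.eigenvalues i)
    linarith
  have hα₂lam : 1 / 2 * (⨆ i, hΓ.inv.1.eigenvalues i) ≤ α₂ := by
    rw [hα₂]
    have := le_max_right 1 (⨆ i, hΓ.inv.1.eigenvalues i)
    linarith
  -- quadratic form bounds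
  have hqfl : ∀ x : EuclideanSpace ℝ (Fin q),
      (⨅ i, hΓ.inv.1.eigenvalues i) * ‖x‖ ^ 2
        ≤ inner ℝ x (Matrix.toEuclideanLin Γ⁻¹ x) :=
    fun x => (RAC.qform_bounds hq Γ⁻¹ hΓ.inv x).1
  have hqfu : ∀ x : EuclideanSpace ℝ (Fin q),
      (inner ℝ x (Matrix.toEuclideanLin Γ⁻¹ x) : ℝ)
        ≤ (⨆ i, hΓ.inv.1.eigenvalues i) * ‖x‖ ^ 2 :=
    fun x => (RAC.qform_bounds hq Γ⁻¹ hΓ.inv x).2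
  -- data conversions
  have heInt' : ∀ t, 0 ≤ t → IntegrableOn e' (Ioc 0 t) := fun t ht =>
    (intervalIntegrable_iff_integrableOn_Ioc_of_le ht).1 (heInt t ht)
  have hθInt' : ∀ t, 0 ≤ t → IntegrableOn θt' (Ioc 0 t) := fun t ht =>
    (intervalIntegrable_iff_integrableOn_Ioc_of_le ht).1 (hθInt t ht)
  have heAC' : ∀ t, 0 ≤ t → e t = e 0 + ∫ τ in Ioc 0 t, e' τ := by
    intro t ht
    rw [heAC t ht, intervalIntegral.integral_of_le ht]
  have hθAC' : ∀ t, 0 ≤ t → θt t = θt 0 + ∫ τ in Ioc 0 t, θt' τ := by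
    intro t ht
    rw [hθAC t ht, intervalIntegral.integral_of_le ht]
  -- continuity and integrability of the states
  have hecont : ∀ t, 0 ≤ t → ContinuousOn e (Icc 0 t) := by
    intro t ht
    exact (continuousOn_const.add (RAC.primitive_continuousOn e' t (heInt' t ht))).congr
      fun τ hτ => heAC' τ hτ.1
  have hθcont : ∀ t, 0 ≤ t → ContinuousOn θt (Icc 0 t) := by
    intro t ht
    exact (continuousOn_const.add (RAC.primitive_continuousOn θt' t (hθInt' t ht))).congr
      fun τ hτ => hθAC' τ hτ.1
  have heIntOn : ∀ t, 0 ≤ t → IntegrableOn e (Ioc 0 t) := fun t ht =>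
    ((hecont t ht).integrableOn_compact isCompact_Icc).mono_set Ioc_subset_Icc_self
  -- the image of θt' under Γ⁻¹
  have hTint : ∀ t, 0 ≤ t →
      IntegrableOn (fun τ => Matrix.toEuclideanLin Γ⁻¹ (θt' τ)) (Ioc 0 t) := fun t ht =>
    (LinearMap.toContinuousLinearMap (Matrix.toEuclideanLin Γ⁻¹)).integrable_comp (hθInt' t ht)
  have hTAC : ∀ τ, 0 ≤ τ → Matrix.toEuclideanLin Γ⁻¹ (θt τ)
      = Matrix.toEuclideanLin Γ⁻¹ (θt 0) + ∫ σ in Ioc 0 τ, Matrix.toEuclideanLin Γ⁻¹ (θt' σ) := by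
    intro τ hτ
    rw [hθAC' τ hτ, map_add]
    congr 1
    exact ((LinearMap.toContinuousLinearMap
      (Matrix.toEuclideanLin Γ⁻¹)).integral_comp_comm (hθInt' τ hτ)).symm
  -- the Lyapunov function and its a.e. derivative
  set V : ℝ → ℝ := fun t => 1 / 2 * ‖e t‖ ^ 2
    + 1 / 2 * (inner ℝ (θt t) (Matrix.toEuclideanLin Γ⁻¹ (θt t)) : ℝ) with hVdef
  set W : ℝ → ℝ := fun τ => (inner ℝ (e τ) (e' τ) : ℝ)
    + (inner ℝ (θt τ) (Matrix.toEuclideanLin Γ⁻¹ (θt' τ)) : ℝ) with hWdef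
  have hWe_int : ∀ t, 0 ≤ t →
      IntegrableOn (fun τ => (inner ℝ (e τ) (e' τ) : ℝ)) (Ioc 0 t) := fun t ht =>
    RAC.inner_state_integrable e' e' e t (heInt' t ht) (heInt' t ht) heAC'
  have hWθ_int : ∀ t, 0 ≤ t →
      IntegrableOn (fun τ => (inner ℝ (θt τ) (Matrix.toEuclideanLin Γ⁻¹ (θt' τ)) : ℝ))
        (Ioc 0 t) := fun t ht =>
    RAC.inner_state_integrable θt' (fun τ => Matrix.toEuclideanLin Γ⁻¹ (θt' τ)) θt t
      (hθInt' t ht) (hTint t ht) hθAC'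
  have hWint : ∀ t, 0 ≤ t → IntegrableOn W (Ioc 0 t) := fun t ht =>
    (hWe_int t ht).add (hWθ_int t ht)
  -- symmetry of Γ⁻¹
  have hsym : ∀ x y : EuclideanSpace ℝ (Fin q),
      (inner ℝ (Matrix.toEuclideanLin Γ⁻¹ x) y : ℝ) = inner ℝ x (Matrix.toEuclideanLin Γ⁻¹ y) :=
    Matrix.isHermitian_iff_isSymmetric.1 hΓ.inv.1
  -- the fundamental identity V t = V 0 + ∫ W
  have hVid : ∀ t, 0 ≤ t → V t = V 0 + ∫ τ in Ioc 0 t, W τ := by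
    intro t ht
    have h1 := RAC.pairing_identity e' e' e e heInt' heInt' heAC' heAC' t ht
    have h2 := RAC.pairing_identity θt' (fun τ => Matrix.toEuclideanLin Γ⁻¹ (θt' τ)) θt
      (fun τ => Matrix.toEuclideanLin Γ⁻¹ (θt τ)) hθInt' hTint hθAC' hTAC t ht
    have h1' : ∫ τ in Ioc 0 t, ((inner ℝ (e' τ) (e τ) : ℝ) + (inner ℝ (e τ) (e' τ) : ℝ))
        = 2 * ∫ τ in Ioc 0 t, (inner ℝ (e τ) (e' τ) : ℝ) := by
      rw [← integral_const_mul]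
      refine integral_congr_ae (Filter.Eventually.of_forall fun τ => ?_)
      show (inner ℝ (e' τ) (e τ) : ℝ) + (inner ℝ (e τ) (e' τ) : ℝ)
        = 2 * (inner ℝ (e τ) (e' τ) : ℝ)
      rw [real_inner_comm (e' τ) (e τ)]
      ring
    have h2' : ∫ τ in Ioc 0 t, ((inner ℝ (θt' τ) (Matrix.toEuclideanLin Γ⁻¹ (θt τ)) : ℝ)
          + (inner ℝ (θt τ) (Matrix.toEuclideanLin Γ⁻¹ (θt' τ)) : ℝ))
        = 2 * ∫ τ in Ioc 0 t, (inner ℝ (θt τ) (Matrix.toEuclideanLin Γ⁻¹ (θt' τ)) : ℝ) := by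
      rw [← integral_const_mul]
      refine integral_congr_ae (Filter.Eventually.of_forall fun τ => ?_)
      show (inner ℝ (θt' τ) (Matrix.toEuclideanLin Γ⁻¹ (θt τ)) : ℝ)
          + (inner ℝ (θt τ) (Matrix.toEuclideanLin Γ⁻¹ (θt' τ)) : ℝ)
        = 2 * (inner ℝ (θt τ) (Matrix.toEuclideanLin Γ⁻¹ (θt' τ)) : ℝ)
      have hx : (inner ℝ (θt' τ) (Matrix.toEuclideanLin Γ⁻¹ (θt τ)) : ℝ)
          = inner ℝ (θt τ) (Matrix.toEuclideanLin Γ⁻¹ (θt' τ)) :=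
        calc (inner ℝ (θt' τ) (Matrix.toEuclideanLin Γ⁻¹ (θt τ)) : ℝ)
            = (inner ℝ (Matrix.toEuclideanLin Γ⁻¹ (θt' τ)) (θt τ) : ℝ) :=
              (hsym (θt' τ) (θt τ)).symm
          _ = inner ℝ (θt τ) (Matrix.toEuclideanLin Γ⁻¹ (θt' τ)) := real_inner_comm _ _
      rw [hx]
      ring
    have hWsum : ∫ τ in Ioc 0 t, W τ
        = (∫ τ in Ioc 0 t, (inner ℝ (e τ) (e' τ) : ℝ))
          + ∫ τ in Ioc 0 t, (inner ℝ (θt τ) (Matrix.toEuclideanLin Γ⁻¹ (θt' τ)) : ℝ) := by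
      simp only [hWdef]
      exact integral_add (hWe_int t ht) (hWθ_int t ht)
    have hne : ∀ r : ℝ, ∀ x : EuclideanSpace ℝ (Fin n), ‖x‖ ^ 2 = (inner ℝ x x : ℝ) :=
      fun r x => (real_inner_self_eq_norm_sq x).symm
    have he2 : ‖e t‖ ^ 2 = (inner ℝ (e t) (e t) : ℝ) := (real_inner_self_eq_norm_sq (e t)).symm
    have he0 : ‖e 0‖ ^ 2 = (inner ℝ (e 0) (e 0) : ℝ) := (real_inner_self_eq_norm_sq (e 0)).symm
    simp only [hVdef]
    rw [he2, he0, hWsum]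
    rw [h1' ] at h1
    rw [h2' ] at h2
    linarith [h1, h2]
  -- a.e. bound on W
  have hWle : ∀ᵐ τ ∂volume, 0 < τ → W τ ≤ -(σs - δ) * ‖e τ‖ := by
    filter_upwards [hdyn, hadapt] with τ hd ha hτ
    have hτ0 : (0:ℝ) ≤ τ := hτ.le
    have c2 : (inner ℝ (θt τ) (Matrix.toEuclideanLin Γ⁻¹ (θt' τ)) : ℝ)
        = -(inner ℝ (θt τ) (Matrix.toEuclideanLin (P τ)ᵀ (e τ)) : ℝ) := by
      rw [ha hτ0, map_neg, inner_neg_right, RAC.toEuclideanLin_comp_apply, ← Matrix.mul_assoc,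
        Matrix.nonsing_inv_mul Γ hGdet, Matrix.one_mul]
    have c1 : (inner ℝ (e τ) (e' τ) : ℝ)
        = (inner ℝ (θt τ) (Matrix.toEuclideanLin (P τ)ᵀ (e τ)) : ℝ)
          + (inner ℝ (e τ) (d τ) : ℝ) - σe * ‖e τ‖ ^ 2 - σs * (inner ℝ (e τ) (s τ) : ℝ) := by
      rw [hd hτ0, inner_sub_right, inner_sub_right, inner_add_right,
        real_inner_smul_right, real_inner_smul_right, real_inner_self_eq_norm_sq,
        RAC.inner_toEuclideanLin_transpose]
    have hW : W τ = (inner ℝ (e τ) (d τ) : ℝ) - σe * ‖e τ‖ ^ 2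
        - σs * (inner ℝ (e τ) (s τ) : ℝ) := by
      simp only [hWdef]
      rw [c1, c2]
      ring
    have hde : (inner ℝ (e τ) (d τ) : ℝ) ≤ δ * ‖e τ‖ := by
      calc (inner ℝ (e τ) (d τ) : ℝ) ≤ ‖e τ‖ * ‖d τ‖ := real_inner_le_norm _ _
        _ ≤ ‖e τ‖ * δ := by nlinarith [norm_nonneg (e τ), hdbound τ hτ0]
        _ = δ * ‖e τ‖ := mul_comm _ _
    have hse : ‖e τ‖ ≤ (inner ℝ (e τ) (s τ) : ℝ) := RAC.inner_filippov_ge _ _ (hsgn τ hτ0)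
    rw [hW]
    nlinarith [sq_nonneg ‖e τ‖, norm_nonneg (e τ), mul_nonneg hσe.le (sq_nonneg ‖e τ‖)]
  -- integral inequality
  have hVle : ∀ t, 0 ≤ t → V t + (σs - δ) * ∫ τ in Ioc 0 t, ‖e τ‖ ≤ V 0 := by
    intro t ht
    have hae : ∀ᵐ τ ∂(volume.restrict (Ioc (0:ℝ) t)), W τ ≤ -((σs - δ) * ‖e τ‖) := by
      rw [ae_restrict_iff' measurableSet_Ioc]
      refine hWle.mono fun τ h hm => ?_
      have := h hm.1
      linarith
    have h1 : ∫ τ in Ioc 0 t, W τ ≤ ∫ τ in Ioc 0 t, -((σs - δ) * ‖e τ‖) :=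
      integral_mono_ae (hWint t ht) (((heIntOn t ht).norm.const_mul (σs - δ)).neg) hae
    have h2 : ∫ τ in Ioc 0 t, -((σs - δ) * ‖e τ‖)
        = -((σs - δ) * ∫ τ in Ioc 0 t, ‖e τ‖) := by
      rw [integral_neg, integral_const_mul]
    have h3 := hVid t ht
    rw [h2] at h1
    linarith
  have henn : ∀ t, 0 ≤ t → 0 ≤ ∫ τ in Ioc 0 t, ‖e τ‖ := fun t ht =>
    setIntegral_nonneg measurableSet_Ioc fun τ _ => norm_nonneg _
  have hVmon : ∀ t, 0 ≤ t → V t ≤ V 0 := by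
    intro t ht
    have := hVle t ht
    have := henn t ht
    nlinarith
  -- bounds on V
  have hVlb : ∀ t, 0 ≤ t → α₁ * (‖e t‖ ^ 2 + ‖θt t‖ ^ 2) ≤ V t := by
    intro t ht
    have q1 := hqfl (θt t)
    simp only [hVdef]
    nlinarith [sq_nonneg ‖e t‖, sq_nonneg ‖θt t‖]
  have hV0ub : V 0 ≤ α₂ * (‖e 0‖ ^ 2 + ‖θt 0‖ ^ 2) := by
    have q2 := hqfu (θt 0)
    simp only [hVdef]
    nlinarith [sq_nonneg ‖e 0‖, sq_nonneg ‖θt 0‖]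
  have hVnonneg : ∀ t, 0 ≤ t → 0 ≤ V t := by
    intro t ht
    have := hVlb t ht
    nlinarith [sq_nonneg ‖e t‖, sq_nonneg ‖θt t‖, hα₁pos]
  have hfrac : ∀ t, 0 ≤ t →
      ‖e t‖ ^ 2 + ‖θt t‖ ^ 2 ≤ α₂ / α₁ * (‖e 0‖ ^ 2 + ‖θt 0‖ ^ 2) := by
    intro t ht
    have h1 := hVlb t ht
    have h2 := hVmon t ht
    rw [div_mul_eq_mul_div, le_div_iff₀ hα₁pos]
    nlinarith
  -- part (i)
  have parti : ∀ t, 0 ≤ t →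
      Real.sqrt (‖e t‖ ^ 2 + ‖θt t‖ ^ 2) ≤
        Real.sqrt (α₂ / α₁) * Real.sqrt (‖e 0‖ ^ 2 + ‖θt 0‖ ^ 2) := by
    intro t ht
    calc Real.sqrt (‖e t‖ ^ 2 + ‖θt t‖ ^ 2)
        ≤ Real.sqrt (α₂ / α₁ * (‖e 0‖ ^ 2 + ‖θt 0‖ ^ 2)) := Real.sqrt_le_sqrt (hfrac t ht)
      _ = Real.sqrt (α₂ / α₁) * Real.sqrt (‖e 0‖ ^ 2 + ‖θt 0‖ ^ 2) :=
          Real.sqrt_mul (by positivity) _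
  refine ⟨parti, ?_⟩
  -- part (ii) : Barbalat
  set B := Real.sqrt (α₂ / α₁ * (‖e 0‖ ^ 2 + ‖θt 0‖ ^ 2)) with hBdef
  have hBnn : 0 ≤ B := Real.sqrt_nonneg _
  have heB : ∀ t, 0 ≤ t → ‖e t‖ ≤ B := by
    intro t ht
    have h1 : ‖e t‖ ^ 2 ≤ α₂ / α₁ * (‖e 0‖ ^ 2 + ‖θt 0‖ ^ 2) := by
      have := hfrac t ht
      nlinarith [sq_nonneg ‖θt t‖]
    calc ‖e t‖ = Real.sqrt (‖e t‖ ^ 2) := (Real.sqrt_sq (norm_nonneg _)).symm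
      _ ≤ B := Real.sqrt_le_sqrt h1
  have hθB : ∀ t, 0 ≤ t → ‖θt t‖ ≤ B := by
    intro t ht
    have h1 : ‖θt t‖ ^ 2 ≤ α₂ / α₁ * (‖e 0‖ ^ 2 + ‖θt 0‖ ^ 2) := by
      have := hfrac t ht
      nlinarith [sq_nonneg ‖e t‖]
    calc ‖θt t‖ = Real.sqrt (‖θt t‖ ^ 2) := (Real.sqrt_sq (norm_nonneg _)).symm
      _ ≤ B := Real.sqrt_le_sqrt h1
  set K := M * B + δ + σe * B + σs * Real.sqrt n + 1 with hKdef
  have hKpos : 0 < K := by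
    have h1 : 0 ≤ M * B := mul_nonneg hM.le hBnn
    have h2 : 0 ≤ σe * B := mul_nonneg hσe.le hBnn
    have h3 : 0 ≤ σs * Real.sqrt n := mul_nonneg hσs.le (Real.sqrt_nonneg _)
    simp only [hKdef]
    linarith
  have he'bd : ∀ᵐ τ ∂volume, 0 < τ → ‖e' τ‖ ≤ K := by
    filter_upwards [hdyn] with τ hd hτ
    have hτ0 : (0:ℝ) ≤ τ := hτ.le
    rw [hd hτ0]
    have b1 : ‖Matrix.toEuclideanLin (P τ) (θt τ)‖ ≤ M * B := by
      calc ‖Matrix.toEuclideanLin (P τ) (θt τ)‖ ≤ M * ‖θt τ‖ := hPbound τ hτ0 _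
        _ ≤ M * B := by nlinarith [hθB τ hτ0]
    have b2 : ‖d τ‖ ≤ δ := hdbound τ hτ0
    have b3 : ‖σe • e τ‖ ≤ σe * B := by
      rw [norm_smul, Real.norm_eq_abs, abs_of_pos hσe]
      nlinarith [heB τ hτ0, norm_nonneg (e τ)]
    have b4 : ‖σs • s τ‖ ≤ σs * Real.sqrt n := by
      rw [norm_smul, Real.norm_eq_abs, abs_of_pos hσs]
      nlinarith [RAC.norm_filippov_le (e τ) (s τ) (hsgn τ hτ0), norm_nonneg (s τ)]
    calc ‖Matrix.toEuclideanLin (P τ) (θt τ) + d τ - σe • e τ - σs • s τ‖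
        ≤ ‖Matrix.toEuclideanLin (P τ) (θt τ) + d τ - σe • e τ‖ + ‖σs • s τ‖ := norm_sub_le _ _
      _ ≤ (‖Matrix.toEuclideanLin (P τ) (θt τ) + d τ‖ + ‖σe • e τ‖) + ‖σs • s τ‖ := by
          have := norm_sub_le (Matrix.toEuclideanLin (P τ) (θt τ) + d τ) (σe • e τ)
          linarith
      _ ≤ ((‖Matrix.toEuclideanLin (P τ) (θt τ)‖ + ‖d τ‖) + ‖σe • e τ‖) + ‖σs • s τ‖ := by
          have := norm_add_le (Matrix.toEuclideanLin (P τ) (θt τ)) (d τ)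
          linarith
      _ ≤ K := by
          simp only [hKdef]
          linarith
  have hLip : ∀ r t, 0 ≤ r → r ≤ t → ‖e t - e r‖ ≤ K * (t - r) := by
    intro r t hr hrt
    have ht0 : (0:ℝ) ≤ t := hr.trans hrt
    have hsub : e t - e r = ∫ τ in Ioc r t, e' τ := by
      rw [heAC' t ht0, heAC' r hr]
      have hsplit : ∫ τ in Ioc 0 t, e' τ
          = (∫ τ in Ioc 0 r, e' τ) + ∫ τ in Ioc r t, e' τ := by
        rw [← setIntegral_union (Ioc_disjoint_Ioc_of_le le_rfl) measurableSet_Ioc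
          ((heInt' t ht0).mono_set (Ioc_subset_Ioc_right hrt))
          ((heInt' t ht0).mono_set (Ioc_subset_Ioc_left hr)),
          Ioc_union_Ioc_eq_Ioc hr hrt]
      rw [hsplit]
      abel
    rw [hsub]
    have h1 : ‖∫ τ in Ioc r t, e' τ‖ ≤ ∫ τ in Ioc r t, ‖e' τ‖ := norm_integral_le_integral_norm _
    have h2 : ∫ τ in Ioc r t, ‖e' τ‖ ≤ ∫ τ in Ioc r t, K := by
      have hae2 : ∀ᵐ τ ∂(volume.restrict (Ioc r t)), ‖e' τ‖ ≤ K := by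
        rw [ae_restrict_iff' measurableSet_Ioc]
        exact he'bd.mono fun τ h hm => h (hr.trans_lt hm.1)
      refine integral_mono_ae (((heInt' t ht0).mono_set (Ioc_subset_Ioc_left hr)).norm)
        (integrableOn_const ?_) hae2
      rw [Real.volume_Ioc]; exact ENNReal.ofReal_ne_top
    have h3 : ∫ τ in Ioc r t, (K:ℝ) = K * (t - r) := by
      rw [setIntegral_const, Real.volume_real_Ioc_of_le hrt, smul_eq_mul,
        mul_comm]
    linarith
  have hgC : ∀ t, 0 ≤ t → ∫ τ in Ioc 0 t, ‖e τ‖ ≤ V 0 / (σs - δ) := by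
    intro t ht
    have h1 := hVle t ht
    have h2 := hVnonneg t ht
    rw [le_div_iff₀ (by linarith : (0:ℝ) < σs - δ)]
    nlinarith
  exact RAC.barbalat (fun τ => ‖e τ‖) K (V 0 / (σs - δ)) hKpos (fun t => norm_nonneg _)
    (fun t ht => (heIntOn t ht).norm) hgC
    (fun r t hr hrt => (abs_norm_sub_norm_le _ _).trans (hLip r t hr hrt))
end

section
/- Let n, q ∈ ℕ, σ_e > 0, σ_s ≥ 0, δ ≥ 0 with σ_s ≥ δ. For every e ∈ ℝⁿ, θ̃ ∈ ℝ^q, P ∈ ℝ^{n×q}, d ∈ ℝⁿ with ‖d‖₂ ≤ δ, and s ∈ K[sgn](e), the following inequality holds: eᵀ(Pθ̃ + d − σ_e e − σ_s s) − θ̃ᵀPᵀe ≤ −σ_e‖e‖₂². -/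
open scoped InnerProductSpace Matrix

/-- **The central pointwise Lyapunov-derivative estimate.**
For `σ_e > 0`, `σ_s ≥ 0`, `δ ≥ 0` with `σ_s ≥ δ`, all `e`, `θ̃`, `P`, `d` with `‖d‖₂ ≤ δ`,
and `s ∈ K[sgn](e)`:
`eᵀ(Pθ̃ + d − σ_e e − σ_s s) − θ̃ᵀPᵀe ≤ −σ_e‖e‖₂²`. -/
theorem lyapunov_derivative_pointwise_bound
    (n q : ℕ) (σe σs δ : ℝ) (hσe : 0 < σe) (hσs : 0 ≤ σs) (hδ : 0 ≤ δ) (hgain : δ ≤ σs)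
    (e : EuclideanSpace ℝ (Fin n)) (θt : EuclideanSpace ℝ (Fin q))
    (P : Matrix (Fin n) (Fin q) ℝ) (d s : EuclideanSpace ℝ (Fin n))
    (hd : ‖d‖ ≤ δ) (hs : s ∈ filippovSgn e) :
    ⟪e, Matrix.toEuclideanLin P θt + d - σe • e - σs • s⟫_ℝ -
      ⟪θt, Matrix.toEuclideanLin Pᵀ e⟫_ℝ ≤ -σe * ‖e‖ ^ 2 := by
  have hcross : ⟪θt, Matrix.toEuclideanLin Pᵀ e⟫_ℝ = ⟪e, Matrix.toEuclideanLin P θt⟫_ℝ := by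
    have hP : (Pᵀ : Matrix (Fin q) (Fin n) ℝ) = Pᴴ := by
      ext i j; simp [Matrix.conjTranspose]
    rw [hP, Matrix.toEuclideanLin_conjTranspose_eq_adjoint,
      LinearMap.adjoint_inner_right, real_inner_comm]
  have hes : ⟪e, s⟫_ℝ = ∑ i, |e i| := by
    rw [PiLp.inner_apply]
    refine Finset.sum_congr rfl fun i _ => ?_
    rcases eq_or_ne (e i) 0 with h | h
    · simp [h]
    · rw [(hs i).1 h]
      simp only [RCLike.inner_apply, starRingEnd_apply, star_trivial]
      rcases lt_or_gt_of_ne h with hlt | hgt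
      · rw [Real.sign_of_neg hlt, abs_of_neg hlt]; ring
      · rw [Real.sign_of_pos hgt, abs_of_pos hgt]; ring
  have hS : (0:ℝ) ≤ ∑ i, |e i| := Finset.sum_nonneg fun i _ => abs_nonneg _
  have hnorm_le : ‖e‖ ≤ ∑ i, |e i| := by
    have hsq : ‖e‖ ^ 2 ≤ (∑ i, |e i|) ^ 2 := by
      rw [EuclideanSpace.norm_eq, Real.sq_sqrt (Finset.sum_nonneg fun i _ => sq_nonneg _)]
      calc ∑ i, ‖e i‖ ^ 2 ≤ ∑ i, |e i| * ∑ j, |e j| := by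
            refine Finset.sum_le_sum fun i _ => ?_
            rw [Real.norm_eq_abs, sq]
            exact mul_le_mul_of_nonneg_left
              (Finset.single_le_sum (fun j _ => abs_nonneg (e j)) (Finset.mem_univ i))
              (abs_nonneg _)
        _ = (∑ i, |e i|) ^ 2 := by rw [← Finset.sum_mul, sq]
    calc ‖e‖ = Real.sqrt (‖e‖ ^ 2) := (Real.sqrt_sq (norm_nonneg e)).symm
      _ ≤ Real.sqrt ((∑ i, |e i|) ^ 2) := Real.sqrt_le_sqrt hsq
      _ = ∑ i, |e i| := Real.sqrt_sq hS
  have hed : ⟪e, d⟫_ℝ ≤ ‖e‖ * δ :=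
    (real_inner_le_norm e d).trans (mul_le_mul_of_nonneg_left hd (norm_nonneg e))
  have hkey : ⟪e, d⟫_ℝ - σs * ⟪e, s⟫_ℝ ≤ 0 := by
    rw [hes]
    have h1 : ‖e‖ * δ ≤ (∑ i, |e i|) * σs :=
      mul_le_mul hnorm_le hgain hδ hS
    nlinarith
  rw [inner_sub_right, inner_sub_right, inner_add_right, inner_smul_right, inner_smul_right,
    real_inner_self_eq_norm_sq, hcross]
  nlinarith
end
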